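/- arXiv:2005.03505 — 3 statements merged into one kernel-verified Lean document; each statement's English description precedes it below -/
import Mathlib

section
/- If f belongs to the Lizorkin space S_0(ℝ) (Schwartz functions on ℝ all of whose moments vanish), then the function g(x) = ∫_{-∞}^x f(t) dt is well defined, belongs to S_0(ℝ), and satisfies 𝓕f(ξ) = 2πi ξ · 𝓕g(ξ) for all ξ ∈ ℝ. -/
open MeasureTheory Complex
open scoped FourierTransform ContDiff

noncomputable section

/-- integration of a Lizorkin function gives a Lizorkin function whose
Fourier transform divides that of `f` by `2πiξ`. -/
theorem lizorkin_antiderivative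
    (f : SchwartzMap ℝ ℂ)
    (hmom : ∀ m : ℕ, ∫ x : ℝ, (x : ℂ) ^ m * f x = 0) :
    (∀ x : ℝ, IntegrableOn (⇑f) (Set.Iic x)) ∧
    (∃ g : SchwartzMap ℝ ℂ,
      (∀ x : ℝ, g x = ∫ t in Set.Iic x, f t) ∧
      (∀ m : ℕ, ∫ x : ℝ, (x : ℂ) ^ m * g x = 0) ∧
      (∀ ξ : ℝ, 𝓕 (⇑f) ξ = (2 * Real.pi * Complex.I * (ξ : ℂ)) * 𝓕 (⇑g) ξ)) := by
  have hInt : Integrable (⇑f) := f.integrable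
  have hIic : ∀ x : ℝ, IntegrableOn (⇑f) (Set.Iic x) := fun x => hInt.integrableOn
  refine ⟨hIic, ?_⟩
  set G : ℝ → ℂ := fun x => ∫ t in Set.Iic x, f t with hGdef
  -- derivative of G is f
  have hder : ∀ x : ℝ, HasDerivAt G (f x) x := by
    intro x
    have h2 : HasDerivAt (fun y : ℝ => ∫ t in (0:ℝ)..y, f t) (f x) x :=
      intervalIntegral.integral_hasDerivAt_right hInt.intervalIntegrable
        f.continuous.stronglyMeasurable.stronglyMeasurableAtFilter f.continuous.continuousAt
    have h1 : ∀ y : ℝ, G y = G 0 + ∫ t in (0:ℝ)..y, f t := by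
      intro y
      have := intervalIntegral.integral_Iic_sub_Iic (hIic 0) (hIic y)
      simp only [hGdef]
      rw [← this]
      ring
    exact (h2.const_add (G 0)).congr_of_eventuallyEq
      (Filter.Eventually.of_forall h1)
  have hdG : deriv G = ⇑f := funext fun x => (hder x).deriv
  have hdiff : Differentiable ℝ G := fun x => (hder x).differentiableAt
  have hsmooth : ContDiff ℝ ∞ G := by
    rw [contDiff_infty_iff_deriv]
    exact ⟨hdiff, hdG ▸ f.smooth'⟩
  -- total integral of f is 0
  have hf0 : ∫ x : ℝ, f x = 0 := by simpa using hmom 0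
  have hGright : ∀ x : ℝ, G x = -∫ t in Set.Ioi x, f t := by
    intro x
    have h := intervalIntegral.integral_Iic_add_Ioi (hIic x) hInt.integrableOn
    rw [hf0] at h
    simp only [hGdef]
    linear_combination h
  -- the basic integrable majorant
  have hint1 : ∀ k : ℕ, Integrable (fun t : ℝ => (1 + ‖t‖) ^ k * ‖f t‖) := by
    intro k
    apply Integrable.mono'
      (((f.integrable_pow_mul volume 0).const_mul ((2:ℝ)^k)).add
        ((f.integrable_pow_mul volume k).const_mul ((2:ℝ)^k)))
      ((continuous_const.add continuous_norm).pow k |>.mul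
        f.continuous.norm).aestronglyMeasurable
    filter_upwards with t
    have h0 : (0:ℝ) ≤ ‖t‖ := norm_nonneg t
    have h1 : (1 + ‖t‖) ^ k ≤ 2 ^ k * (1 + ‖t‖ ^ k) := by
      have hb : 1 + ‖t‖ ≤ 2 * max 1 ‖t‖ := by
        rcases le_total ‖t‖ 1 with h | h
        · rw [max_eq_left h]; linarith
        · rw [max_eq_right h]; linarith
      calc (1 + ‖t‖) ^ k ≤ (2 * max 1 ‖t‖) ^ k := by
            exact pow_le_pow_left₀ (by positivity) hb k
        _ = 2 ^ k * (max 1 ‖t‖) ^ k := by rw [mul_pow]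
        _ ≤ 2 ^ k * (1 + ‖t‖ ^ k) := by
            gcongr
            rcases le_total ‖t‖ 1 with h | h
            · rw [max_eq_left h, one_pow]
              have := pow_nonneg h0 k; linarith
            · rw [max_eq_right h]
              have := pow_nonneg h0 k; linarith
    have h2 : ‖(1 + ‖t‖) ^ k * ‖f t‖‖ = (1 + ‖t‖) ^ k * ‖f t‖ :=
      Real.norm_of_nonneg (by positivity)
    change ‖(1 + ‖t‖) ^ k * ‖f t‖‖ ≤ _
    rw [h2]
    have := mul_le_mul_of_nonneg_right h1 (norm_nonneg (f t))
    simp only [Pi.add_apply]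
    calc (1 + ‖t‖) ^ k * ‖f t‖ ≤ 2 ^ k * (1 + ‖t‖ ^ k) * ‖f t‖ := this
      _ = 2 ^ k * (‖t‖ ^ 0 * ‖f t‖) + 2 ^ k * (‖t‖ ^ k * ‖f t‖) := by ring
  -- decay bound for G itself
  have hbound : ∀ k : ℕ, ∀ x : ℝ, ‖x‖ ^ k * ‖G x‖ ≤ ∫ t : ℝ, (1 + ‖t‖) ^ k * ‖f t‖ := by
    intro k x
    have hnonneg : 0 ≤ᵐ[volume] fun t : ℝ => (1 + ‖t‖) ^ k * ‖f t‖ :=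
      Filter.Eventually.of_forall fun t => by positivity
    rcases le_total x 0 with hx | hx
    · -- estimate on Iic x
      have h1 : ‖G x‖ ≤ ∫ t in Set.Iic x, ‖f t‖ := norm_integral_le_integral_norm _
      have h2 : ‖x‖ ^ k * ‖G x‖ ≤ ∫ t in Set.Iic x, ‖x‖ ^ k * ‖f t‖ := by
        rw [MeasureTheory.integral_const_mul]
        exact mul_le_mul_of_nonneg_left h1 (by positivity)
      refine h2.trans ((setIntegral_mono_on
        ((hInt.norm.const_mul _).integrableOn)
        ((hint1 k).integrableOn) measurableSet_Iic ?_).trans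
        (setIntegral_le_integral (hint1 k) hnonneg))
      intro t ht
      have ht' : t ≤ x := ht
      have : ‖x‖ ≤ 1 + ‖t‖ := by
        rw [Real.norm_eq_abs, Real.norm_eq_abs, abs_of_nonpos hx,
          abs_of_nonpos (ht'.trans hx)]
        linarith
      exact mul_le_mul_of_nonneg_right
        (pow_le_pow_left₀ (norm_nonneg x) this k) (norm_nonneg _)
    · -- estimate on Ioi x
      have h1 : ‖G x‖ ≤ ∫ t in Set.Ioi x, ‖f t‖ := by
        rw [hGright x, norm_neg]
        exact norm_integral_le_integral_norm _
      have h2 : ‖x‖ ^ k * ‖G x‖ ≤ ∫ t in Set.Ioi x, ‖x‖ ^ k * ‖f t‖ := by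
        rw [MeasureTheory.integral_const_mul]
        exact mul_le_mul_of_nonneg_left h1 (by positivity)
      refine h2.trans ((setIntegral_mono_on
        ((hInt.norm.const_mul _).integrableOn)
        ((hint1 k).integrableOn) measurableSet_Ioi ?_).trans
        (setIntegral_le_integral (hint1 k) hnonneg))
      intro t ht
      have ht' : x < t := ht
      have : ‖x‖ ≤ 1 + ‖t‖ := by
        rw [Real.norm_eq_abs, Real.norm_eq_abs, _root_.abs_of_nonneg hx,
          _root_.abs_of_nonneg (hx.trans ht'.le)]
        linarith
      exact mul_le_mul_of_nonneg_right
        (pow_le_pow_left₀ (norm_nonneg x) this k) (norm_nonneg _)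
  -- iterated derivatives of G
  have hiter : ∀ (n : ℕ) (x : ℝ),
      ‖iteratedFDeriv ℝ (n + 1) G x‖ = ‖iteratedFDeriv ℝ n (⇑f) x‖ := by
    intro n x
    rw [norm_iteratedFDeriv_eq_norm_iteratedDeriv,
      norm_iteratedFDeriv_eq_norm_iteratedDeriv, iteratedDeriv_succ', hdG]
  have hdecay : ∀ k n : ℕ, ∃ C : ℝ, ∀ x, ‖x‖ ^ k * ‖iteratedFDeriv ℝ n G x‖ ≤ C := by
    intro k n
    cases n with
    | zero =>
      refine ⟨∫ t : ℝ, (1 + ‖t‖) ^ k * ‖f t‖, fun x => ?_⟩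
      simpa using hbound k x
    | succ n =>
      obtain ⟨C, hC⟩ := f.decay' k n
      exact ⟨C, fun x => by rw [hiter n x]; exact hC x⟩
  -- build g
  set g : SchwartzMap ℝ ℂ := ⟨G, hsmooth, hdecay⟩ with hgdef
  have hg : ∀ x : ℝ, g x = ∫ t in Set.Iic x, f t := fun x => rfl
  have hgG : ⇑g = G := rfl
  -- polynomial times Schwartz is integrable
  have hpoly : ∀ (h : SchwartzMap ℝ ℂ) (m : ℕ),
      Integrable (fun x : ℝ => (x : ℂ) ^ m * h x) := by
    intro h m
    apply Integrable.mono' (h.integrable_pow_mul volume m)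
      (((Complex.continuous_ofReal.pow m).mul h.continuous).aestronglyMeasurable)
    filter_upwards with x
    change ‖(x : ℂ) ^ m * h x‖ ≤ _
    rw [norm_mul, norm_pow, Complex.norm_real]
  -- moments of g vanish
  have hmomg : ∀ m : ℕ, ∫ x : ℝ, (x : ℂ) ^ m * g x = 0 := by
    intro m
    have hm1 : ((m : ℂ) + 1) ≠ 0 := Nat.cast_add_one_ne_zero m
    have hu : ∀ x : ℝ, HasDerivAt (fun y : ℝ => ((m : ℂ) + 1)⁻¹ * (y : ℂ) ^ (m + 1))
        ((x : ℂ) ^ m) x := by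
      intro x
      have h2 : HasDerivAt (fun y : ℝ => (y : ℂ) ^ (m + 1))
          (((m : ℂ) + 1) * (x : ℂ) ^ m) x := by
        have := (hasDerivAt_pow (m + 1) ((x : ℝ) : ℂ)).comp_ofReal
        simpa using this
      have := h2.const_mul (((m : ℂ) + 1)⁻¹)
      rw [inv_mul_cancel_left₀ hm1] at this
      exact this
    have huv' : Integrable ((fun y : ℝ => ((m : ℂ) + 1)⁻¹ * (y : ℂ) ^ (m + 1)) * ⇑f) := by
      have := (hpoly f (m + 1)).const_mul (((m : ℂ) + 1)⁻¹)
      refine this.congr (Filter.Eventually.of_forall fun x => ?_)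
      simp [Pi.mul_apply, mul_assoc]
    have hu'v : Integrable ((fun y : ℝ => (y : ℂ) ^ m) * G) := by
      have := hpoly g m
      rw [hgG] at this
      exact this
    have huv : Integrable ((fun y : ℝ => ((m : ℂ) + 1)⁻¹ * (y : ℂ) ^ (m + 1)) * G) := by
      have := (hpoly g (m + 1)).const_mul (((m : ℂ) + 1)⁻¹)
      rw [hgG] at this
      refine this.congr (Filter.Eventually.of_forall fun x => ?_)
      simp [Pi.mul_apply, mul_assoc]
    have key := MeasureTheory.integral_mul_deriv_eq_deriv_mul_of_integrable
      (fun x _ => hu x) (fun x _ => hder x) huv' hu'v huv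
    -- key : ∫ u x * f x = -∫ x^m * G x
    have hL : ∫ x : ℝ, ((m : ℂ) + 1)⁻¹ * (x : ℂ) ^ (m + 1) * f x = 0 := by
      have : ∀ x : ℝ, ((m : ℂ) + 1)⁻¹ * (x : ℂ) ^ (m + 1) * f x
          = ((m : ℂ) + 1)⁻¹ * ((x : ℂ) ^ (m + 1) * f x) := fun x => by ring
      simp_rw [this, MeasureTheory.integral_const_mul, hmom (m + 1), mul_zero]
    rw [hL] at key
    have : ∫ x : ℝ, (x : ℂ) ^ m * G x = 0 := by
      have := key.symm
      rwa [neg_eq_zero] at this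
    simpa [hgG] using this
  refine ⟨g, hg, hmomg, ?_⟩
  -- Fourier identity
  intro ξ
  have hInt' : Integrable (deriv G) := by rw [hdG]; exact hInt
  have h := Real.fourier_deriv g.integrable hdiff hInt'
  have h' := congrFun h ξ
  rw [hgG, hdG] at h'
  rw [hgG, h', smul_eq_mul]

end
end

section
/- Let f ∈ S_0(ℝ) and g(x) = ∫_{-∞}^x f(t) dt. Then for every k ∈ ℕ, sup_{x∈ℝ} ⟨x⟩^k |g(x)| ≤ C · ρ_{2k+4}(f) for some constant C > 0 independent of f, where ρ_ν(φ) = sup_{x∈ℝ, l≤ν} ⟨x⟩^ν |φ^{(l)}(x)| and ⟨x⟩ = (1+x²)^{1/2}. -/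
open MeasureTheory Complex
open scoped FourierTransform

noncomputable section

/-- Japanese bracket ⟨x⟩ = (1+x²)^{1/2}. -/
def jp (x : ℝ) : ℝ := Real.sqrt (1 + x ^ 2)

/-- Schwartz seminorms ρ_ν(φ) = sup_{x, l ≤ ν} ⟨x⟩^ν |φ^{(l)}(x)|. -/
def rho1 (ν : ℕ) (f : ℝ → ℂ) : ℝ :=
  ⨆ p : ℝ × Fin (ν + 1), jp p.1 ^ ν * ‖iteratedDeriv p.2 f p.1‖

lemma jp_pos (x : ℝ) : 0 < jp x := Real.sqrt_pos.2 (by positivity)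

lemma jp_sq (x : ℝ) : jp x ^ 2 = 1 + x ^ 2 := Real.sq_sqrt (by positivity)

lemma one_le_jp (x : ℝ) : 1 ≤ jp x := by
  nlinarith [jp_sq x, jp_pos x, sq_nonneg x]

lemma jp_le_jp {x t : ℝ} (h : |x| ≤ |t|) : jp x ≤ jp t := by
  apply Real.sqrt_le_sqrt
  nlinarith [_root_.sq_abs x, _root_.sq_abs t, abs_nonneg x, sq_nonneg (|t| - |x|)]

lemma jp_le_one_add (x : ℝ) : jp x ≤ 1 + |x| := by
  rw [jp, show (1:ℝ) + |x| = Real.sqrt ((1 + |x|)^2) from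
    (Real.sqrt_sq (by positivity)).symm]
  exact Real.sqrt_le_sqrt (by nlinarith [abs_nonneg x, _root_.sq_abs x])

lemma rho1_bdd (ν : ℕ) (f : SchwartzMap ℝ ℂ) :
    BddAbove (Set.range fun p : ℝ × Fin (ν + 1) =>
      jp p.1 ^ ν * ‖iteratedDeriv p.2 ⇑f p.1‖) := by
  refine ⟨2 ^ ν * (Finset.Iic ((ν : ℕ), (ν : ℕ))).sup
      (fun m => SchwartzMap.seminorm ℝ m.1 m.2) f, ?_⟩
  rintro _ ⟨p, rfl⟩
  calc jp p.1 ^ ν * ‖iteratedDeriv p.2 ⇑f p.1‖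
      ≤ (1 + ‖p.1‖) ^ ν * ‖iteratedFDeriv ℝ p.2 ⇑f p.1‖ := by
        rw [← norm_iteratedFDeriv_eq_norm_iteratedDeriv]
        gcongr
        · exact (jp_pos _).le
        · simpa [Real.norm_eq_abs] using jp_le_one_add p.1
    _ ≤ _ := SchwartzMap.one_add_le_sup_seminorm_apply (𝕜 := ℝ)
        (m := (ν, ν)) le_rfl (Fin.is_le p.2) f p.1

lemma le_rho1 (ν : ℕ) (f : SchwartzMap ℝ ℂ) (t : ℝ) :
    jp t ^ ν * ‖f t‖ ≤ rho1 ν ⇑f := by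
  have := le_ciSup (rho1_bdd ν f) (t, (0 : Fin (ν + 1)))
  simpa [iteratedDeriv_zero, rho1] using this

lemma rho1_nonneg (ν : ℕ) (f : SchwartzMap ℝ ℂ) : 0 ≤ rho1 ν ⇑f :=
  le_trans (mul_nonneg (pow_nonneg (jp_pos 0).le _) (norm_nonneg _)) (le_rho1 ν f 0)

/-- bound on the antiderivative of a Lizorkin function. -/
theorem antiderivative_bound (k : ℕ) :
    ∃ C : ℝ, 0 < C ∧ ∀ (f : SchwartzMap ℝ ℂ),
      (∀ m : ℕ, ∫ x : ℝ, (x : ℂ) ^ m * f x = 0) →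
      ∀ x : ℝ, jp x ^ k * ‖∫ t in Set.Iic x, f t‖ ≤ C * rho1 (2 * k + 4) ⇑f := by
  refine ⟨Real.pi, Real.pi_pos, fun f hf x => ?_⟩
  set ν := 2 * k + 4 with hν
  set ρ := rho1 ν ⇑f with hρdef
  have hρ0 : 0 ≤ ρ := rho1_nonneg ν f
  have hjx : (0:ℝ) < jp x ^ k := pow_pos (jp_pos x) k
  -- pointwise bound
  have hpt : ∀ t : ℝ, |x| ≤ |t| → ‖f t‖ ≤ ρ * (jp x ^ k)⁻¹ * ((1 + t ^ 2)⁻¹) := by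
    intro t ht
    have h1 : jp x ^ k * ((1 + t ^ 2) * ‖f t‖) ≤ ρ := by
      have hle : jp x ^ k ≤ jp t ^ k := pow_le_pow_left₀ (jp_pos x).le (jp_le_jp ht) k
      have h2 : jp x ^ k * ((1 + t ^ 2) * ‖f t‖) ≤ jp t ^ (k + 2) * ‖f t‖ := by
        rw [← jp_sq t, pow_add]
        have : (0:ℝ) ≤ jp t ^ 2 * ‖f t‖ := by positivity
        nlinarith [norm_nonneg (f t)]
      have h3 : jp t ^ (k + 2) ≤ jp t ^ ν :=
        pow_le_pow_right₀ (one_le_jp t) (by omega)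
      calc jp x ^ k * ((1 + t ^ 2) * ‖f t‖) ≤ jp t ^ (k + 2) * ‖f t‖ := h2
        _ ≤ jp t ^ ν * ‖f t‖ := mul_le_mul_of_nonneg_right h3 (norm_nonneg _)
        _ ≤ ρ := le_rho1 ν f t
    have hpos : (0:ℝ) < jp x ^ k * (1 + t ^ 2) := by positivity
    rw [show ρ * (jp x ^ k)⁻¹ * (1 + t ^ 2)⁻¹ = ρ / (jp x ^ k * (1 + t ^ 2)) by
      field_simp, le_div_iff₀ hpos]
    nlinarith [h1]
  -- integral bound over a set where |x| ≤ |t|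
  have hint : Integrable (fun t : ℝ => ρ * (jp x ^ k)⁻¹ * (1 + t ^ 2)⁻¹) :=
    integrable_inv_one_add_sq.const_mul _
  have key : ∀ S : Set ℝ, MeasurableSet S → (∀ t ∈ S, |x| ≤ |t|) →
      ‖∫ t in S, f t‖ ≤ ρ * (jp x ^ k)⁻¹ * Real.pi := by
    intro S hS hSle
    calc ‖∫ t in S, f t‖
        ≤ ∫ t in S, ρ * (jp x ^ k)⁻¹ * (1 + t ^ 2)⁻¹ := by
          refine norm_integral_le_of_norm_le hint.integrableOn ?_
          exact (ae_restrict_iff' hS).2 (ae_of_all _ fun t ht => hpt t (hSle t ht))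
      _ ≤ ∫ t : ℝ, ρ * (jp x ^ k)⁻¹ * (1 + t ^ 2)⁻¹ := by
          refine setIntegral_le_integral hint (ae_of_all _ fun t => ?_)
          positivity
      _ = ρ * (jp x ^ k)⁻¹ * Real.pi := by
          rw [integral_const_mul, integral_univ_inv_one_add_sq]
  have hmain : ‖∫ t in Set.Iic x, f t‖ ≤ ρ * (jp x ^ k)⁻¹ * Real.pi := by
    rcases le_or_gt x 0 with hx | hx
    · refine key _ measurableSet_Iic fun t ht => ?_
      rw [Set.mem_Iic] at ht
      rw [abs_of_nonpos hx, abs_of_nonpos (ht.trans hx)]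
      linarith
    · have h0 : (∫ t : ℝ, f t) = 0 := by
        have := hf 0
        simpa using this
      have hsplit := intervalIntegral.integral_Iic_add_Ioi ((f.integrable (μ := volume)).integrableOn)
        ((f.integrable (μ := volume)).integrableOn) (b := x)
      have : (∫ t in Set.Iic x, f t) = -∫ t in Set.Ioi x, f t := by
        rw [h0] at hsplit
        linear_combination hsplit
      rw [this, norm_neg]
      refine key _ measurableSet_Ioi fun t ht => ?_
      rw [Set.mem_Ioi] at ht
      rw [_root_.abs_of_nonneg hx.le, _root_.abs_of_nonneg (hx.le.trans ht.le)]
      exact ht.le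
  calc jp x ^ k * ‖∫ t in Set.Iic x, f t‖
      ≤ jp x ^ k * (ρ * (jp x ^ k)⁻¹ * Real.pi) := by gcongr
    _ = Real.pi * ρ := by field_simp

end
end

section
/- The Fourier transform is a linear isomorphism from the Lizorkin space S_0(ℝ^d) onto the Fourier–Lizorkin space Ŝ_0(ℝ^d) of Schwartz functions all of whose partial derivatives vanish at the origin. -/
open MeasureTheory
open scoped FourierTransform

noncomputable section

abbrev Ed (d : ℕ) := EuclideanSpace ℝ (Fin d)

/-- monomial x^m = ∏ x_i^{m_i} -/
def monom {d : ℕ} (m : Fin d → ℕ) (x : Ed d) : ℝ := ∏ i, (x i) ^ (m i)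

/-- partial derivative in the i-th coordinate direction -/
def pderiv1 {d : ℕ} (i : Fin d) (f : Ed d → ℂ) : Ed d → ℂ :=
  fun x => fderiv ℝ f x (EuclideanSpace.single i 1)

/-- multi-index partial derivative ∂^m -/
def mpderiv {d : ℕ} (m : Fin d → ℕ) (f : Ed d → ℂ) : Ed d → ℂ :=
  (List.finRange d).foldr (fun i g => (pderiv1 i)^[m i] g) f

/-- Lizorkin membership: Schwartz with all vanishing moments. -/
def IsLizorkin {d : ℕ} (f : Ed d → ℂ) : Prop :=
  (∃ g : SchwartzMap (Ed d) ℂ, ⇑g = f) ∧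
    ∀ m : Fin d → ℕ, ∫ x : Ed d, (monom m x : ℝ) • f x = 0

/-- Fourier–Lizorkin membership: Schwartz with all partial derivatives vanishing at 0. -/
def IsFourierLizorkin {d : ℕ} (f : Ed d → ℂ) : Prop :=
  (∃ g : SchwartzMap (Ed d) ℂ, ⇑g = f) ∧
    ∀ m : Fin d → ℕ, mpderiv m f 0 = 0

def Dop {d : ℕ} (i : Fin d) (F : SchwartzMap (Ed d) ℂ) : SchwartzMap (Ed d) ℂ :=
  (-(2*Real.pi*Complex.I)) • (SchwartzMap.bilinLeftCLM
    ((ContinuousLinearMap.lsmul ℝ ℝ : ℝ →L[ℝ] ℂ →L[ℝ] ℂ).flip)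
    (EuclideanSpace.proj (𝕜 := ℝ) i).hasTemperateGrowth F)

lemma Dop_apply {d : ℕ} (i : Fin d) (F : SchwartzMap (Ed d) ℂ) (x : Ed d) :
    Dop i F x = (-(2*Real.pi*Complex.I) * (x i)) • F x := by
  rw [Dop, SchwartzMap.smul_apply]
  show (-(2*(Real.pi:ℂ)*Complex.I)) • ((x i) • F x) = _
  simp only [smul_comm, Complex.real_smul, smul_eq_mul]
  ring

lemma pderiv1_fourier {d : ℕ} (i : Fin d) (F : SchwartzMap (Ed d) ℂ) :
    pderiv1 i (𝓕 ⇑F) = ⇑(SchwartzMap.fourierTransformCLM ℂ (Dop i F)) := by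
  funext ξ
  have hf : Integrable (⇑F) := F.integrable
  have hvf : Integrable (fun v : Ed d => ‖v‖ * ‖F v‖) := by
    simpa using F.integrable_pow_mul volume 1
  have hint : Integrable (fun x => VectorFourier.fourierSMulRight (innerSL ℝ) (⇑F) x) := by
    refine Integrable.mono' (hvf.const_mul (2 * Real.pi * ‖(innerSL ℝ (E := Ed d))‖))
      hf.aestronglyMeasurable.fourierSMulRight ?_
    filter_upwards with x
    simpa [mul_assoc] using VectorFourier.norm_fourierSMulRight_le (innerSL ℝ) (⇑F) x
  rw [pderiv1, Real.fderiv_fourier hf hvf,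
    Real.fourier_continuousLinearMap_apply hint,
    SchwartzMap.fourierTransformCLM_apply, SchwartzMap.fourier_coe]
  refine congrArg (fun h : Ed d → ℂ => 𝓕 h ξ) ?_
  funext x
  rw [Dop_apply]
  have : ((innerSL ℝ) x) (EuclideanSpace.single i (1:ℝ)) = x i := by
    rw [innerSL_apply_apply, EuclideanSpace.inner_single_right]
    simp
  simp [this, smul_smul]
  ring

lemma iter_fourier {d : ℕ} (i : Fin d) (n : ℕ) (F : SchwartzMap (Ed d) ℂ) :
    (pderiv1 i)^[n] (⇑(SchwartzMap.fourierTransformCLM ℂ F))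
      = ⇑(SchwartzMap.fourierTransformCLM ℂ ((Dop i)^[n] F)) := by
  induction n with
  | zero => rfl
  | succ n ih =>
      rw [Function.iterate_succ_apply', Function.iterate_succ_apply', ih]
      exact pderiv1_fourier i _

lemma mpderiv_fourier {d : ℕ} (m : Fin d → ℕ) (F : SchwartzMap (Ed d) ℂ) :
    mpderiv m (𝓕 ⇑F) = ⇑(SchwartzMap.fourierTransformCLM ℂ
      ((List.finRange d).foldr (fun i G => (Dop i)^[m i] G) F)) := by
  rw [mpderiv]
  have : 𝓕 ⇑F = ⇑(SchwartzMap.fourierTransformCLM ℂ F) := rfl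
  rw [this]
  generalize List.finRange d = l
  induction l with
  | nil => rfl
  | cons i l ih => simp only [List.foldr_cons, ih, iter_fourier]

lemma iter_Dop_apply {d : ℕ} (i : Fin d) (n : ℕ) (F : SchwartzMap (Ed d) ℂ) (x : Ed d) :
    ((Dop i)^[n] F) x = (-(2*Real.pi*Complex.I) * (x i))^n • F x := by
  induction n with
  | zero => simp
  | succ n ih =>
      rw [Function.iterate_succ_apply', Dop_apply, ih, smul_smul, ← pow_succ']

lemma foldr_Dop_apply {d : ℕ} (m : Fin d → ℕ) (l : List (Fin d)) (F : SchwartzMap (Ed d) ℂ)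
    (x : Ed d) :
    (l.foldr (fun i G => (Dop i)^[m i] G) F) x
      = ((l.map (fun i => (-(2*Real.pi*Complex.I) * (x i))^(m i))).prod) • F x := by
  induction l with
  | nil => simp
  | cons i l ih =>
      rw [List.foldr_cons, iter_Dop_apply, ih, smul_smul, List.map_cons, List.prod_cons]

lemma key {d : ℕ} (F : SchwartzMap (Ed d) ℂ) (m : Fin d → ℕ) :
    mpderiv m (𝓕 ⇑F) 0
      = (∏ i, (-(2*Real.pi*Complex.I))^(m i)) * ∫ x : Ed d, (monom m x : ℝ) • F x := by
  rw [mpderiv_fourier, SchwartzMap.fourierTransformCLM_apply, SchwartzMap.fourier_coe, Real.fourier_eq]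
  simp only [inner_zero_right, neg_zero, Real.fourierChar_apply, Circle.smul_def]
  push_cast
  simp only [mul_zero, zero_mul, Complex.ofReal_zero, Complex.exp_zero, one_smul]
  rw [← MeasureTheory.integral_const_mul]
  congr 1
  funext x
  rw [foldr_Dop_apply]
  have h1 : ((List.finRange d).map (fun i => (-(2*Real.pi*Complex.I) * (x i))^(m i))).prod
      = ∏ i, (-(2*(Real.pi:ℂ)*Complex.I) * (x i))^(m i) := by
    rw [Fin.prod_univ_def]
  rw [h1]
  have h2 : (∏ i, (-(2*(Real.pi:ℂ)*Complex.I) * (x i))^(m i))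
      = (∏ i, (-(2*(Real.pi:ℂ)*Complex.I))^(m i)) * ((monom m x : ℝ) : ℂ) := by
    rw [monom]
    push_cast
    rw [← Finset.prod_mul_distrib]
    exact Finset.prod_congr rfl fun i _ => mul_pow _ _ _
  rw [h2, smul_eq_mul, Complex.real_smul, mul_assoc]

lemma Cne {d : ℕ} (m : Fin d → ℕ) : (∏ i, (-(2*Real.pi*Complex.I))^(m i)) ≠ 0 := by
  refine Finset.prod_ne_zero_iff.2 fun i _ => pow_ne_zero _ ?_
  simp [Real.pi_ne_zero, Complex.I_ne_zero]

/-- the Fourier transform is a (linear) bijection from the Lizorkin space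
onto the Fourier–Lizorkin space. -/
theorem fourier_lizorkin_iso {d : ℕ} :
    (∀ f : Ed d → ℂ, IsLizorkin f → IsFourierLizorkin (𝓕 f)) ∧
    (∀ g : Ed d → ℂ, IsFourierLizorkin g →
      ∃! f : Ed d → ℂ, IsLizorkin f ∧ 𝓕 f = g) := by
  constructor
  · rintro f ⟨⟨F, rfl⟩, hmom⟩
    refine ⟨⟨SchwartzMap.fourierTransformCLM ℂ F, rfl⟩, fun m => ?_⟩
    rw [key, hmom m, mul_zero]
  · rintro g ⟨⟨G, rfl⟩, hder⟩
    set F := (SchwartzMap.fourierTransformCLE ℂ (SchwartzMap (Ed d) ℂ)).symm G with hFdef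
    have hFG : 𝓕 ⇑F = ⇑G := by
      have h := (SchwartzMap.fourierTransformCLE ℂ (SchwartzMap (Ed d) ℂ)).apply_symm_apply G
      calc 𝓕 ⇑F = ⇑(SchwartzMap.fourierTransformCLE ℂ (SchwartzMap (Ed d) ℂ) F) := rfl
        _ = ⇑G := by rw [h]
    refine ⟨⇑F, ⟨⟨⟨F, rfl⟩, fun m => ?_⟩, hFG⟩, ?_⟩
    · have h := key F m
      rw [hFG, hder m] at h
      exact (mul_eq_zero.mp h.symm).resolve_left (Cne m)
    · rintro f' ⟨⟨⟨F', rfl⟩, _⟩, hf'⟩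
      have hchar : SchwartzMap.fourierTransformCLE ℂ (SchwartzMap (Ed d) ℂ) F'
          = SchwartzMap.fourierTransformCLE ℂ (SchwartzMap (Ed d) ℂ) F := by
        apply DFunLike.coe_injective
        show 𝓕 ⇑F' = 𝓕 ⇑F
        rw [hf', hFG]
      have h2 := (SchwartzMap.fourierTransformCLE ℂ (SchwartzMap (Ed d) ℂ)).injective hchar
      rw [h2]


end
end
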